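/- Fix x ∈ [0, 2π·log(φ)). For every ε > 0 there exist positive integers m (even) and n with n ≡ 0 or 1 (mod 3), n ≥ 4, such that |(2π/(m+n))·(log(m+1) + n·log(φ)) − x| < ε. -/

import Mathlib

open Real Filter

theorem approx_step (x : ℝ)
    (hx : x ∈ Set.Ico (0 : ℝ) (2 * π * Real.log ((1 + Real.sqrt 5) / 2))) :
    ∀ ε > 0, ∃ m n : ℕ, 0 < m ∧ Even m ∧ 4 ≤ n ∧ (n % 3 = 0 ∨ n % 3 = 1) ∧
      |(2 * π / (m + n)) * (Real.log (m + 1) +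
        n * Real.log ((1 + Real.sqrt 5) / 2)) - x| < ε := by
  intro ε hε
  obtain ⟨hx0, hxlt⟩ := hx
  classical
  set L : ℝ := Real.log ((1 + Real.sqrt 5) / 2) with hLdef
  have h5 : (1:ℝ) < Real.sqrt 5 := by
    have : Real.sqrt 1 < Real.sqrt 5 := Real.sqrt_lt_sqrt (by norm_num) (by norm_num)
    simpa using this
  have hL : 0 < L := Real.log_pos (by rw [hLdef] at *; linarith)
  have hπ : 0 < π := Real.pi_pos
  -- choose n
  obtain ⟨N, hN⟩ := exists_nat_gt (max (2*x/(2*π*L - x)) (4*π*(1+L)/ε))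
  set n : ℕ := 3*N + 6 with hndef
  have hNn : (N:ℝ) ≤ (n:ℝ) := by exact_mod_cast Nat.le_of_lt_succ (by omega)
  have hn6 : (6:ℝ) ≤ (n:ℝ) := by exact_mod_cast (by omega : 6 ≤ n)
  have hnpos : (0:ℝ) < (n:ℝ) := by linarith
  have hn1 : 2*x/(2*π*L - x) < (n:ℝ) :=
    lt_of_lt_of_le (lt_of_le_of_lt (le_max_left _ _) hN) hNn
  have hn2 : 4*π*(1+L)/ε < (n:ℝ) :=
    lt_of_lt_of_le (lt_of_le_of_lt (le_max_right _ _) hN) hNn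
  have hsub : 0 < 2*π*L - x := by linarith
  have h2x : 2*x < (n:ℝ) * (2*π*L - x) := by
    have := (div_lt_iff₀ hsub).mp hn1
    linarith
  have hεn : 4*π*(1+L) < ε * (n:ℝ) := by
    have := (div_lt_iff₀ hε).mp hn2
    linarith
  set g : ℕ → ℝ := fun k => 2*π/(2*(k:ℝ)+2+(n:ℝ)) * (Real.log (2*(k:ℝ)+3) + (n:ℝ)*L)
    with hgdef
  -- g 0 > x
  have hg0 : x < g 0 := by
    simp only [hgdef]
    norm_num
    have hlog3 : 0 ≤ Real.log 3 := Real.log_nonneg (by norm_num)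
    have hpos : (0:ℝ) < 2 + (n:ℝ) := by linarith
    rw [div_mul_eq_mul_div, lt_div_iff₀ hpos]
    nlinarith [h2x, hlog3, hπ]
  -- upper bound on g
  have hub : ∀ k : ℕ, g k ≤ 2*π*(1+L) := by
    intro k
    simp only [hgdef]
    have hk : (0:ℝ) ≤ (k:ℝ) := Nat.cast_nonneg k
    set d : ℝ := 2*(k:ℝ)+2+(n:ℝ) with hddef
    have hd : 0 < d := by positivity
    have hlog : Real.log (2*(k:ℝ)+3) ≤ 2*(k:ℝ)+2 := by
      have := Real.log_le_sub_one_of_pos (show (0:ℝ) < 2*(k:ℝ)+3 by linarith)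
      linarith
    have hA : Real.log (2*(k:ℝ)+3) + (n:ℝ)*L ≤ d * (1+L) := by
      have hnd : (n:ℝ) ≤ d := by rw [hddef]; linarith
      have h1 : (n:ℝ)*L ≤ d*L := mul_le_mul_of_nonneg_right hnd hL.le
      have h2 : d*(1+L) = d + d*L := by ring
      linarith
    have h0A : 0 ≤ Real.log (2*(k:ℝ)+3) + (n:ℝ)*L := by
      have : 0 ≤ Real.log (2*(k:ℝ)+3) := Real.log_nonneg (by linarith)
      have := mul_nonneg hnpos.le hL.le
      linarith
    calc 2*π/d * (Real.log (2*(k:ℝ)+3) + (n:ℝ)*L)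
        ≤ 2*π/d * (d * (1+L)) := by
          apply mul_le_mul_of_nonneg_left hA (by positivity)
      _ = 2*π*(1+L) := by field_simp
  -- step bound
  have hstep : ∀ k : ℕ, g k - g (k+1) < ε := by
    intro k
    simp only [hgdef]
    simp only [Nat.cast_add, Nat.cast_one]
    have hk : (0:ℝ) ≤ (k:ℝ) := Nat.cast_nonneg k
    have e1 : 2*((k:ℝ)+1)+2+(n:ℝ) = (2*(k:ℝ)+2+(n:ℝ)) + 2 := by ring
    have e2 : 2*((k:ℝ)+1)+3 = 2*(k:ℝ)+5 := by ring
    rw [e1, e2]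
    set d : ℝ := 2*(k:ℝ)+2+(n:ℝ) with hddef
    have hd : 0 < d := by positivity
    have hnd : (n:ℝ) ≤ d := by rw [hddef]; linarith
    have hlog : Real.log (2*(k:ℝ)+3) ≤ 2*(k:ℝ)+2 := by
      have := Real.log_le_sub_one_of_pos (show (0:ℝ) < 2*(k:ℝ)+3 by linarith)
      linarith
    have hmono : Real.log (2*(k:ℝ)+3) ≤ Real.log (2*(k:ℝ)+5) :=
      Real.log_le_log (by linarith) (by linarith)
    have h0A : 0 ≤ Real.log (2*(k:ℝ)+3) + (n:ℝ)*L := by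
      have : 0 ≤ Real.log (2*(k:ℝ)+3) := Real.log_nonneg (by linarith)
      have := mul_nonneg hnpos.le hL.le
      linarith
    have hA : Real.log (2*(k:ℝ)+3) + (n:ℝ)*L ≤ d * (1+L) := by
      have h1 : (n:ℝ)*L ≤ d*L := mul_le_mul_of_nonneg_right hnd hL.le
      have h2 : d*(1+L) = d + d*L := by ring
      linarith
    rw [div_mul_eq_mul_div, div_mul_eq_mul_div, div_sub_div _ _ hd.ne' (by linarith : (d+2) ≠ 0),
      div_lt_iff₀ (by nlinarith : (0:ℝ) < d*(d+2))]
    have hAA' : Real.log (2*(k:ℝ)+3) + (n:ℝ)*L ≤ Real.log (2*(k:ℝ)+5) + (n:ℝ)*L := by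
      linarith
    linarith [mul_le_mul_of_nonneg_left hAA' (le_of_lt (by positivity : (0:ℝ) < 2*π*d)),
      mul_le_mul_of_nonneg_left hA (by positivity : (0:ℝ) ≤ 4*π),
      mul_lt_mul_of_pos_left hεn hd,
      mul_le_mul_of_nonneg_left (show (n:ℝ) ≤ d+2 by linarith) (by positivity : (0:ℝ) ≤ ε*d)]
  -- existence of k with g k < x + ε
  have hex : ∃ k : ℕ, g k < x + ε := by
    have hten1 : Tendsto (fun t : ℝ => Real.log t / ((1/2)*t + 1/2)) atTop (nhds 0) := by
      have := Real.tendsto_pow_log_div_mul_add_atTop (1/2) (1/2) 1 (by norm_num)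
      simpa using this
    have hcomp : Tendsto (fun k : ℕ => 2*(k:ℝ)+3) atTop atTop := by
      apply tendsto_atTop_add_const_right
      exact Tendsto.const_mul_atTop (by norm_num) tendsto_natCast_atTop_atTop
    have hten2 : Tendsto (fun k : ℕ => Real.log (2*(k:ℝ)+3) / ((k:ℝ)+2)) atTop (nhds 0) := by
      refine (hten1.comp hcomp).congr fun k => ?_
      simp only [Function.comp]
      rw [show (1/2)*(2*(k:ℝ)+3)+1/2 = (k:ℝ)+2 by ring]
    have hten3 : Tendsto (fun k : ℕ => ((k:ℝ)+2)⁻¹) atTop (nhds 0) := by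
      have h : Tendsto (fun k : ℕ => (k:ℝ)+2) atTop atTop :=
        tendsto_atTop_add_const_right atTop 2 tendsto_natCast_atTop_atTop
      exact tendsto_inv_atTop_zero.comp h
    have hu : Tendsto (fun k : ℕ => π * (Real.log (2*(k:ℝ)+3) / ((k:ℝ)+2))
        + π*(n:ℝ)*L * ((k:ℝ)+2)⁻¹) atTop (nhds 0) := by
      have := (hten2.const_mul π).add (hten3.const_mul (π*(n:ℝ)*L))
      simpa using this
    have hev : ∀ᶠ k : ℕ in atTop, π * (Real.log (2*(k:ℝ)+3) / ((k:ℝ)+2))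
        + π*(n:ℝ)*L * ((k:ℝ)+2)⁻¹ < x + ε := hu.eventually_lt_const (by linarith)
    obtain ⟨k, hk⟩ := hev.exists
    refine ⟨k, lt_of_le_of_lt ?_ hk⟩
    simp only [hgdef]
    have hkc : (0:ℝ) ≤ (k:ℝ) := Nat.cast_nonneg k
    have hd : (0:ℝ) < 2*(k:ℝ)+2+(n:ℝ) := by positivity
    have hd2 : 2*((k:ℝ)+2) ≤ 2*(k:ℝ)+2+(n:ℝ) := by linarith
    have h0A : 0 ≤ Real.log (2*(k:ℝ)+3) + (n:ℝ)*L := by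
      have : 0 ≤ Real.log (2*(k:ℝ)+3) := Real.log_nonneg (by linarith)
      have := mul_nonneg hnpos.le hL.le
      linarith
    calc 2*π/(2*(k:ℝ)+2+(n:ℝ)) * (Real.log (2*(k:ℝ)+3) + (n:ℝ)*L)
        ≤ 2*π/(2*((k:ℝ)+2)) * (Real.log (2*(k:ℝ)+3) + (n:ℝ)*L) := by
          apply mul_le_mul_of_nonneg_right _ h0A
          apply div_le_div_of_nonneg_left (by positivity) (by positivity) hd2
      _ = π * (Real.log (2*(k:ℝ)+3) / ((k:ℝ)+2)) + π*(n:ℝ)*L * ((k:ℝ)+2)⁻¹ := by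
          field_simp
  -- minimal such k
  obtain ⟨k₀, hhi, hmin⟩ : ∃ k, g k < x + ε ∧ ∀ j, j < k → ¬ (g j < x + ε) :=
    ⟨Nat.find hex, Nat.find_spec hex, fun j hj => Nat.find_min hex hj⟩
  have hlo : x < g k₀ := by
    rcases Nat.eq_zero_or_pos k₀ with h0 | hpos
    · rw [h0]; exact hg0
    · obtain ⟨j, hj⟩ : ∃ j, k₀ = j + 1 := ⟨k₀ - 1, by omega⟩
      have hminj : ¬ (g j < x + ε) := hmin j (by omega)
      push_neg at hminj
      have := hstep j
      rw [hj]
      linarith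
  refine ⟨2*k₀+2, n, by omega, ⟨k₀+1, by ring⟩, by omega, Or.inl (by omega), ?_⟩
  have h1 : ((2*k₀+2 : ℕ) : ℝ) + (n:ℝ) = 2*(k₀:ℝ)+2+(n:ℝ) := by push_cast; ring
  have h2 : ((2*k₀+2 : ℕ) : ℝ) + 1 = 2*(k₀:ℝ)+3 := by push_cast; ring
  rw [h1, h2, abs_sub_lt_iff]
  constructor
  · have := hhi; simp only [hgdef] at this
    exact sub_lt_iff_lt_add'.mpr this
  · have := hlo; simp only [hgdef] at this
    exact (sub_neg.mpr this).trans hε
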